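/- For the left-composition matrix Q_L(x) associated to x ∈ M (with rows [[x₀,-x₁,0,0],[x₁,x₀,0,0],[x₂,x₃,x₀,-x₁],[x₃,-x₂,x₁,x₀]]), the spectral norm satisfies ‖Q_L(x)‖₂ ≤ ‖x‖₂ + √2, where ‖x‖₂ = √(x₀²+x₁²+x₂²+x₃²). -/

import Mathlib

open Matrix

/-- Left-composition matrix `Q_L(x)` of a planar unit dual quaternion. -/
noncomputable def QL (x : Fin 4 → ℝ) : Matrix (Fin 4) (Fin 4) ℝ :=
  !![x 0, -x 1, 0, 0;
     x 1,  x 0, 0, 0;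
     x 2,  x 3, x 0, -x 1;
     x 3, -x 2, x 1,  x 0]

private lemma clm_apply (A : Matrix (Fin 4) (Fin 4) ℝ) (v : EuclideanSpace ℝ (Fin 4)) (i : Fin 4) :
    (toEuclideanCLM (𝕜 := ℝ) A v) i = A.mulVec (fun j => v j) i := by
  have h := congrFun (ofLp_toEuclideanCLM A v) i
  simpa [WithLp.equiv] using h

private lemma norm_clm (A : Matrix (Fin 4) (Fin 4) ℝ) (v : EuclideanSpace ℝ (Fin 4)) :
    ‖toEuclideanCLM (𝕜 := ℝ) A v‖ =
      Real.sqrt (∑ i, (A.mulVec (fun j => v j) i) ^ 2) := by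
  rw [EuclideanSpace.norm_eq]
  congr 1
  refine Finset.sum_congr rfl fun i _ => ?_
  rw [clm_apply, Real.norm_eq_abs, sq_abs]

theorem QL_spectral_norm_le (x : Fin 4 → ℝ) (hx : x 0 ^ 2 + x 1 ^ 2 = 1) :
    ‖Matrix.toEuclideanCLM (𝕜 := ℝ) (QL x)‖ ≤
      Real.sqrt (x 0 ^ 2 + x 1 ^ 2 + x 2 ^ 2 + x 3 ^ 2) + Real.sqrt 2 := by
  have hA : ∀ v : EuclideanSpace ℝ (Fin 4),
      ‖toEuclideanCLM (𝕜 := ℝ)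
        (!![x 0, -x 1, 0, 0; x 1, x 0, 0, 0; 0, 0, x 0, -x 1; 0, 0, x 1, x 0]) v‖ = ‖v‖ := by
    intro v
    rw [norm_clm, EuclideanSpace.norm_eq]
    congr 1
    simp [Fin.sum_univ_four, Matrix.mulVec, dotProduct, Real.norm_eq_abs, sq_abs,
      Matrix.vecHead, Matrix.vecTail]
    nlinarith [hx, sq_nonneg (v 0), sq_nonneg (v 1), sq_nonneg (v 2), sq_nonneg (v 3)]
  set s : ℝ := x 2 ^ 2 + x 3 ^ 2 with hs
  have hs0 : (0:ℝ) ≤ s := by positivity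
  have hB : ∀ v : EuclideanSpace ℝ (Fin 4),
      ‖toEuclideanCLM (𝕜 := ℝ)
        (!![0, 0, 0, 0; 0, 0, 0, 0; x 2, x 3, 0, 0; x 3, -x 2, 0, 0]) v‖
        ≤ Real.sqrt s * ‖v‖ := by
    intro v
    rw [norm_clm, EuclideanSpace.norm_eq, ← Real.sqrt_mul hs0]
    apply Real.sqrt_le_sqrt
    simp [Fin.sum_univ_four, Matrix.mulVec, dotProduct, Real.norm_eq_abs, sq_abs,
      Matrix.vecHead, Matrix.vecTail]
    nlinarith [sq_nonneg (x 2 * v 0 + x 3 * v 1), sq_nonneg (x 3 * v 0 - x 2 * v 1),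
      sq_nonneg (x 2), sq_nonneg (x 3), sq_nonneg (v 2), sq_nonneg (v 3)]
  have hsplit : QL x =
      !![x 0, -x 1, 0, 0; x 1, x 0, 0, 0; 0, 0, x 0, -x 1; 0, 0, x 1, x 0] +
      !![0, 0, 0, 0; 0, 0, 0, 0; x 2, x 3, 0, 0; x 3, -x 2, 0, 0] := by
    ext i j
    fin_cases i <;> fin_cases j <;>
      simp [QL, Matrix.vecHead, Matrix.vecTail]
  apply ContinuousLinearMap.opNorm_le_bound _ (by positivity)
  intro v
  have htri : ‖toEuclideanCLM (𝕜 := ℝ) (QL x) v‖ ≤ (1 + Real.sqrt s) * ‖v‖ := by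
    rw [hsplit, map_add, ContinuousLinearMap.add_apply]
    calc ‖_ + _‖ ≤ _ + _ := norm_add_le _ _
      _ ≤ 1 * ‖v‖ + Real.sqrt s * ‖v‖ := by rw [one_mul, hA v]; exact add_le_add_right (hB v) _
      _ = (1 + Real.sqrt s) * ‖v‖ := by ring
  refine htri.trans ?_
  apply mul_le_mul_of_nonneg_right _ (norm_nonneg v)
  rw [hx]
  have h1 : (1:ℝ) ≤ Real.sqrt 2 := by
    rw [show (1:ℝ) = Real.sqrt 1 from (Real.sqrt_one).symm]
    exact Real.sqrt_le_sqrt (by norm_num)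
  have h2 : Real.sqrt s ≤ Real.sqrt (1 + x 2 ^ 2 + x 3 ^ 2) :=
    Real.sqrt_le_sqrt (by rw [hs]; linarith [sq_nonneg (x 2), sq_nonneg (x 3)])
  linarith
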